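/- Let Θ be a real symmetric positive definite p×p matrix with eigenvalues λ_1 ≥ … ≥ λ_p > 0, and suppose H ⊆ {1,…,p} with |H| = r satisfies min_{h∈H} α_h ≥ τ · max_{k∉H} α_k for some τ > 0, where α_k = ‖Θ_{·k}‖₂². Then λ_{2r+1}² ≤ (p/τ) · min_{h∈H} α_h ≤ (p/τ) · λ_1². In particular λ_1/λ_{2r+1} ≥ √(τ/p). -/

import Mathlib

open Matrix BigOperators

/-- A hub set with separation `τ` forces a spiked eigenvalue structure:
`λ_{2r+1}² ≤ (p/τ)·min_{h∈H} α_h ≤ (p/τ)·λ_1²` and `λ_1/λ_{2r+1} ≥ √(τ/p)`. -/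
theorem hub_implies_eigenvalue_spike {p r : ℕ} (h2r : 2 * r < p) (τ : ℝ) (hτ : 0 < τ)
    (Θ : Matrix (Fin p) (Fin p) ℝ) (hsymm : Θ.IsSymm) (hpd : Θ.PosDef)
    (lam : Fin p → ℝ) (v : Fin p → Fin p → ℝ)
    (hanti : Antitone lam) (hpos : ∀ i, 0 < lam i)
    (horth : ∀ i j, v i ⬝ᵥ v j = if i = j then (1 : ℝ) else 0)
    (hdecomp : Θ = ∑ i, lam i • Matrix.vecMulVec (v i) (v i))
    (H : Finset (Fin p)) (hcard : H.card = r) (hHne : H.Nonempty)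
    (hub : ∀ h ∈ H, ∀ k : Fin p, k ∉ H →
      τ * (∑ l, (Θ l k) ^ 2) ≤ ∑ l, (Θ l h) ^ 2) :
    (lam ⟨2 * r, h2r⟩) ^ 2 ≤ (p / τ) * H.inf' hHne (fun h => ∑ l, (Θ l h) ^ 2) ∧
    (p / τ) * H.inf' hHne (fun h => ∑ l, (Θ l h) ^ 2) ≤ (p / τ) * (lam ⟨0, by omega⟩) ^ 2 ∧
    Real.sqrt (τ / p) ≤ lam ⟨0, by omega⟩ / lam ⟨2 * r, h2r⟩ := by
  have hp0 : 0 < p := by omega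
  set A := H.inf' hHne (fun h => ∑ l, (Θ l h) ^ 2) with hA
  -- basic entrywise facts
  have hΘ : ∀ k l, Θ k l = ∑ i, lam i * (v i k * v i l) := by
    intro k l
    rw [hdecomp]
    simp [Matrix.sum_apply, Matrix.vecMulVec_apply, mul_assoc]
  have hdot : ∀ i j, (∑ k, v i k * v j k) = if i = j then (1:ℝ) else 0 := by
    intro i j; simpa [dotProduct] using horth i j
  have hgen : ∀ (f : Fin p → ℝ) (i : Fin p),
      (∑ l, v i l * (∑ j, f j * v j l)) = f i := by
    intro f i
    have h1 : ∀ l, v i l * (∑ j, f j * v j l) = ∑ j, f j * (v i l * v j l) := by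
      intro l; rw [Finset.mul_sum]; exact Finset.sum_congr rfl fun j _ => by ring
    rw [Finset.sum_congr rfl fun l _ => h1 l, Finset.sum_comm]
    have h2 : ∀ j, (∑ l, f j * (v i l * v j l)) = if i = j then f j else 0 := by
      intro j; rw [← Finset.mul_sum, hdot i j]
      by_cases h : i = j <;> simp [h]
    rw [Finset.sum_congr rfl fun j _ => h2 j, Finset.sum_ite_eq]
    simp
  have hexp : ∀ (f g : Fin p → ℝ),
      (∑ l, (∑ i, f i * v i l) * (∑ j, g j * v j l)) = ∑ i, f i * g i := by
    intro f g
    have h1 : ∀ l, (∑ i, f i * v i l) * (∑ j, g j * v j l)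
        = ∑ i, f i * (v i l * (∑ j, g j * v j l)) := by
      intro l; rw [Finset.sum_mul]; exact Finset.sum_congr rfl fun i _ => by ring
    rw [Finset.sum_congr rfl fun l _ => h1 l, Finset.sum_comm]
    refine Finset.sum_congr rfl fun i _ => ?_
    rw [← Finset.mul_sum, hgen g i]
  -- columns of the eigenvector matrix are unit vectors
  have hcol : ∀ k, (∑ i, (v i k) ^ 2) = 1 := by
    intro k
    have h1 : (Matrix.of v) * (Matrix.of v)ᵀ = 1 := by
      ext i j
      simpa [Matrix.mul_apply, Matrix.one_apply] using hdot i j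
    have h2 := mul_eq_one_comm.mp h1
    have h3 := congrFun (congrFun h2 k) k
    simpa [Matrix.mul_apply, Matrix.one_apply, pow_two] using h3
  -- α_k = ∑ λ_i² v_i(k)²
  have hαeq : ∀ k, (∑ l, (Θ l k) ^ 2) = ∑ i, (lam i) ^ 2 * (v i k) ^ 2 := by
    intro k
    calc (∑ l, (Θ l k) ^ 2)
        = ∑ l, (∑ i, (lam i * v i k) * v i l) * (∑ j, (lam j * v j k) * v j l) := by
          refine Finset.sum_congr rfl fun l _ => ?_
          rw [show Θ l k = ∑ i, (lam i * v i k) * v i l from by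
            rw [hΘ]; exact Finset.sum_congr rfl fun i _ => by ring]
          ring
      _ = ∑ i, (lam i * v i k) * (lam i * v i k) := hexp _ _
      _ = ∑ i, (lam i) ^ 2 * (v i k) ^ 2 := Finset.sum_congr rfl fun i _ => by ring
  -- α_k ≤ λ₀²
  have hαle : ∀ k, (∑ l, (Θ l k) ^ 2) ≤ (lam ⟨0, by omega⟩) ^ 2 := by
    intro k
    rw [hαeq k]
    calc (∑ i, (lam i) ^ 2 * (v i k) ^ 2)
        ≤ ∑ i, (lam ⟨0, by omega⟩) ^ 2 * (v i k) ^ 2 := by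
          refine Finset.sum_le_sum fun i _ => ?_
          have h1 : lam i ≤ lam ⟨0, by omega⟩ := hanti (by
            rw [Fin.le_def]; exact Nat.zero_le _)
          have h2 := hpos i
          exact mul_le_mul_of_nonneg_right (by nlinarith) (sq_nonneg _)
      _ = (lam ⟨0, by omega⟩) ^ 2 * ∑ i, (v i k) ^ 2 := by rw [Finset.mul_sum]
      _ = (lam ⟨0, by omega⟩) ^ 2 := by rw [hcol k, mul_one]
  have hAnn : 0 ≤ A := by
    rw [hA]
    exact Finset.le_inf' hHne _ fun b _ => Finset.sum_nonneg fun l _ => sq_nonneg _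
  have hA2 : A ≤ (lam ⟨0, by omega⟩) ^ 2 := by
    obtain ⟨h0, hh0⟩ := hHne
    exact le_trans (Finset.inf'_le _ hh0) (hαle h0)
  -- construct nonzero coefficient vector d with ∑ d_j v_j vanishing on H
  have hle : 2 * r + 1 ≤ p := h2r
  set emb : Fin (2 * r + 1) → Fin p := Fin.castLE hle with hemb
  let g : (Fin (2 * r + 1) → ℝ) →ₗ[ℝ] (↥H → ℝ) :=
    { toFun := fun d h => ∑ j, d j * v (emb j) h.1
      map_add' := by
        intro a b; funext h; simp [add_mul, Finset.sum_add_distrib]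
      map_smul' := by
        intro m a; funext h; simp [Finset.mul_sum, mul_assoc] }
  have hginj : ¬ Function.Injective g := by
    intro hinj
    have hle2 := LinearMap.finrank_le_finrank_of_injective hinj
    rw [Module.finrank_pi, Module.finrank_pi] at hle2
    simp only [Fintype.card_fin, Fintype.card_coe, hcard] at hle2
    omega
  obtain ⟨a, b, hab, habne⟩ := Function.not_injective_iff.mp hginj
  set d := a - b with hd
  have hd0 : d ≠ 0 := sub_ne_zero.mpr habne
  have hgd : g d = 0 := by rw [hd, map_sub, hab, sub_self]
  set c : Fin p → ℝ := fun i => if hi : (i : ℕ) < 2 * r + 1 then d ⟨i, hi⟩ else 0 with hc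
  have hcemb : ∀ j, c (emb j) = d j := by
    intro j
    have hjlt : ((emb j : Fin p) : ℕ) < 2 * r + 1 := j.isLt
    simp only [hc]
    rw [dif_pos hjlt]
    exact congrArg d (Fin.ext rfl)
  have hcsum : ∀ t : Fin p → ℝ,
      (∑ i, c i * t i) = ∑ j : Fin (2 * r + 1), d j * t (emb j) := by
    intro t
    have h1 : (∑ i ∈ Finset.univ.map ⟨emb, Fin.castLE_injective hle⟩, c i * t i)
        = ∑ i, c i * t i := by
      apply Finset.sum_subset (Finset.subset_univ _)
      intro i _ hi
      have hni : ¬ (i : ℕ) < 2 * r + 1 := by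
        intro hlt
        exact hi (Finset.mem_map.mpr ⟨⟨(i : ℕ), hlt⟩, Finset.mem_univ _, Fin.ext rfl⟩)
      simp [hc, hni]; intro h; exact (hni (by omega)).elim
    rw [← h1, Finset.sum_map]
    refine Finset.sum_congr rfl fun j _ => ?_
    simp only [Function.Embedding.coeFn_mk]
    rw [hcemb j]
  set x : Fin p → ℝ := fun k => ∑ i, c i * v i k with hxdef
  have hx0 : ∀ h ∈ H, x h = 0 := by
    intro h hh
    have h1 : x h = ∑ j, d j * v (emb j) h := by
      simp only [hxdef]; exact hcsum fun i => v i h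
    rw [h1]
    exact congrFun hgd ⟨h, hh⟩
  have hxS : (∑ k, x k * x k) = ∑ i, c i * c i := by
    simp only [hxdef]; exact hexp c c
  have hSpos : 0 < ∑ i, c i * c i := by
    obtain ⟨j, hj⟩ := Function.ne_iff.mp hd0
    refine Finset.sum_pos' (fun i _ => mul_self_nonneg _) ⟨emb j, Finset.mem_univ _, ?_⟩
    have : c (emb j) ≠ 0 := by rw [hcemb j]; exact hj
    exact mul_self_pos.mpr this
  -- spectral form of quadratic form
  have hy : ∀ k, (∑ l, Θ k l * x l) = ∑ i, (lam i * c i) * v i k := by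
    intro k
    have h1 : ∀ l, Θ k l * x l = ∑ i, (lam i * v i k) * (v i l * x l) := by
      intro l; rw [hΘ, Finset.sum_mul]
      exact Finset.sum_congr rfl fun i _ => by ring
    rw [Finset.sum_congr rfl fun l _ => h1 l, Finset.sum_comm]
    refine Finset.sum_congr rfl fun i _ => ?_
    rw [← Finset.mul_sum]
    have hvs : (∑ l, v i l * x l) = c i := by
      simp only [hxdef]; exact hgen c i
    rw [hvs]; ring
  have hQspec : (∑ k, ∑ l, x k * Θ k l * x l) = ∑ i, lam i * (c i * c i) := by
    have h1 : (∑ k, ∑ l, x k * Θ k l * x l) = ∑ k, x k * (∑ l, Θ k l * x l) := by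
      refine Finset.sum_congr rfl fun k _ => ?_
      rw [Finset.mul_sum]
      exact Finset.sum_congr rfl fun l _ => by ring
    rw [h1]
    have h2 : ∀ k, x k * (∑ l, Θ k l * x l)
        = (∑ i, c i * v i k) * (∑ i, (lam i * c i) * v i k) := by
      intro k; rw [hy k]
    rw [Finset.sum_congr rfl fun k _ => h2 k, hexp c (fun i => lam i * c i)]
    exact Finset.sum_congr rfl fun i _ => by ring
  -- lower bound on the quadratic form
  have hQlow : lam ⟨2 * r, h2r⟩ * (∑ i, c i * c i) ≤ ∑ i, lam i * (c i * c i) := by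
    rw [Finset.mul_sum]
    refine Finset.sum_le_sum fun i _ => ?_
    by_cases hi : (i : ℕ) < 2 * r + 1
    · have h1 : lam ⟨2 * r, h2r⟩ ≤ lam i := hanti (by
        rw [Fin.le_def]; simp; omega)
      exact mul_le_mul_of_nonneg_right h1 (mul_self_nonneg _)
    · have : c i = 0 := by simp [hc, hi]; intro h; exact (hi (by omega)).elim
      simp [this]
  -- Q equals quadratic form of the truncated matrix M
  set M : Fin p → Fin p → ℝ := fun k l => if k ∈ H ∨ l ∈ H then 0 else Θ k l with hM
  have hQM : (∑ k, ∑ l, x k * Θ k l * x l) = ∑ k, ∑ l, x k * M k l * x l := by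
    refine Finset.sum_congr rfl fun k _ => Finset.sum_congr rfl fun l _ => ?_
    by_cases hk : k ∈ H
    · simp [hx0 k hk]
    · by_cases hl : l ∈ H
      · simp [hx0 l hl]
      · simp [hM, hk, hl]
  -- Frobenius bound
  have hFM : (∑ k, ∑ l, (M k l) ^ 2) ≤ (p / τ) * A := by
    rw [Finset.sum_comm]
    have hbound : ∀ l : Fin p, (∑ k, (M k l) ^ 2) ≤ A / τ := by
      intro l
      by_cases hl : l ∈ H
      · have : (∑ k, (M k l) ^ 2) = 0 := by simp [hM, hl]
        rw [this]; positivity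
      · have h1 : (∑ k, (M k l) ^ 2) ≤ ∑ k, (Θ k l) ^ 2 := by
          refine Finset.sum_le_sum fun k _ => ?_
          by_cases hk : k ∈ H
          · simp [hM, hk]; positivity
          · simp [hM, hk, hl]
        have h2 : τ * (∑ k, (Θ k l) ^ 2) ≤ A := by
          rw [hA]
          exact Finset.le_inf' hHne _ fun h hh => hub h hh l hl
        have h3 : (∑ k, (Θ k l) ^ 2) ≤ A / τ := (le_div_iff₀' hτ).mpr h2
        linarith
    calc (∑ l, ∑ k, (M k l) ^ 2) ≤ ∑ _l : Fin p, A / τ :=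
          Finset.sum_le_sum fun l _ => hbound l
      _ = (p : ℝ) * (A / τ) := by
          rw [Finset.sum_const, Finset.card_univ, Fintype.card_fin, nsmul_eq_mul]
      _ = (p / τ) * A := by ring
  -- Cauchy–Schwarz
  have hCS : (∑ k, ∑ l, x k * M k l * x l) ^ 2
      ≤ (∑ k, ∑ l, (M k l) ^ 2) * ((∑ i, c i * c i) * (∑ i, c i * c i)) := by
    have h1 : (∑ k, ∑ l, x k * M k l * x l)
        = ∑ q : Fin p × Fin p, (x q.1 * x q.2) * M q.1 q.2 := by
      rw [Fintype.sum_prod_type]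
      exact Finset.sum_congr rfl fun k _ => Finset.sum_congr rfl fun l _ => by ring
    have h2 := Finset.sum_mul_sq_le_sq_mul_sq Finset.univ
      (fun q : Fin p × Fin p => x q.1 * x q.2) (fun q => M q.1 q.2)
    have h3 : (∑ q : Fin p × Fin p, (x q.1 * x q.2) ^ 2)
        = (∑ i, c i * c i) * (∑ i, c i * c i) := by
      rw [Fintype.sum_prod_type]
      calc (∑ k, ∑ l, (x k * x l) ^ 2)
          = ∑ k, ∑ l, (x k * x k) * (x l * x l) :=
            Finset.sum_congr rfl fun k _ => Finset.sum_congr rfl fun l _ => by ring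
        _ = (∑ k, x k * x k) * (∑ l, x l * x l) :=
            (Finset.sum_mul_sum Finset.univ Finset.univ _ _).symm
        _ = (∑ i, c i * c i) * (∑ i, c i * c i) := by rw [hxS]
    have h4 : (∑ q : Fin p × Fin p, (M q.1 q.2) ^ 2) = ∑ k, ∑ l, (M k l) ^ 2 := by
      rw [Fintype.sum_prod_type]
    rw [h1]
    calc (∑ q : Fin p × Fin p, (x q.1 * x q.2) * M q.1 q.2) ^ 2
        ≤ (∑ q : Fin p × Fin p, (x q.1 * x q.2) ^ 2) * ∑ q : Fin p × Fin p, (M q.1 q.2) ^ 2 :=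
          h2
      _ = (∑ k, ∑ l, (M k l) ^ 2) * ((∑ i, c i * c i) * (∑ i, c i * c i)) := by
          rw [h3, h4]; ring
  -- combine for part 1
  have hpart1 : (lam ⟨2 * r, h2r⟩) ^ 2 ≤ (p / τ) * A := by
    set S := ∑ i, c i * c i with hS
    have hl2 := hpos ⟨2 * r, h2r⟩
    have hLS : 0 ≤ lam ⟨2 * r, h2r⟩ * S := by positivity
    have hQ2 : (lam ⟨2 * r, h2r⟩ * S) ^ 2 ≤ ((p / τ) * A) * (S * S) := by
      have hq1 : (lam ⟨2 * r, h2r⟩ * S) ^ 2 ≤ (∑ k, ∑ l, x k * Θ k l * x l) ^ 2 := by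
        have := hQspec ▸ hQlow
        exact pow_le_pow_left₀ hLS (by rw [hQspec]; exact hQlow) 2
      have hq2 := hQM ▸ hCS
      have hq3 : (∑ k, ∑ l, (M k l) ^ 2) * (S * S) ≤ ((p / τ) * A) * (S * S) := by
        have hSS : 0 ≤ S * S := by positivity
        exact mul_le_mul_of_nonneg_right hFM hSS
      calc (lam ⟨2 * r, h2r⟩ * S) ^ 2 ≤ (∑ k, ∑ l, x k * Θ k l * x l) ^ 2 := hq1
        _ = (∑ k, ∑ l, x k * M k l * x l) ^ 2 := by rw [hQM]
        _ ≤ (∑ k, ∑ l, (M k l) ^ 2) * (S * S) := hCS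
        _ ≤ ((p / τ) * A) * (S * S) := hq3
    have hSS0 : 0 < S * S := by positivity
    have : (lam ⟨2 * r, h2r⟩) ^ 2 * (S * S) ≤ ((p / τ) * A) * (S * S) := by
      calc (lam ⟨2 * r, h2r⟩) ^ 2 * (S * S) = (lam ⟨2 * r, h2r⟩ * S) ^ 2 := by ring
        _ ≤ ((p / τ) * A) * (S * S) := hQ2
    exact le_of_mul_le_mul_right this hSS0
  have hpτ : 0 ≤ (p : ℝ) / τ := by positivity
  have hpart2 : (p / τ) * A ≤ (p / τ) * (lam ⟨0, by omega⟩) ^ 2 :=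
    mul_le_mul_of_nonneg_left hA2 hpτ
  refine ⟨hpart1, hpart2, ?_⟩
  -- part 3
  have hl0 := hpos ⟨0, by omega⟩
  have hl2 := hpos ⟨2 * r, h2r⟩
  have hchain : (lam ⟨2 * r, h2r⟩) ^ 2 ≤ (p / τ) * (lam ⟨0, by omega⟩) ^ 2 :=
    le_trans hpart1 hpart2
  have hppos : (0 : ℝ) < p := by exact_mod_cast hp0
  have key : τ / p ≤ (lam ⟨0, by omega⟩ / lam ⟨2 * r, h2r⟩) ^ 2 := by
    rw [div_pow, div_le_div_iff₀ hppos (by positivity)]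
    have h3 := mul_le_mul_of_nonneg_left hchain hτ.le
    have h4 : τ * ((p / τ) * (lam ⟨0, by omega⟩) ^ 2) = p * (lam ⟨0, by omega⟩) ^ 2 := by
      field_simp
    nlinarith
  calc Real.sqrt (τ / p) ≤ Real.sqrt ((lam ⟨0, by omega⟩ / lam ⟨2 * r, h2r⟩) ^ 2) :=
        Real.sqrt_le_sqrt key
    _ = lam ⟨0, by omega⟩ / lam ⟨2 * r, h2r⟩ :=
        Real.sqrt_sq (le_of_lt (div_pos hl0 hl2))
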